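/- Suppose L satisfies (L1)–(L3) and f : ℝⁿ → ℝ is Lipschitz with Lipschitz constant K. Fix T > 0 and set λ₁(T,K) = θ_T*(K+1) + c_T + θ̄_T(0), where θ_T*(s) = sup_{r≥0}{rs − θ_T(r)}. Then for any 0 ≤ t₁ < t₂ ≤ T and x₁, x₂ ∈ ℝⁿ: (1) the infimum T⁻_{t₁,t₂}f(x₂) = inf_{z∈ℝⁿ}{f(z) + A_{t₁,t₂}(z,x₂)} is attained, and every minimizer z satisfies |z − x₂| ≤ λ₁(T,K)(t₂ − t₁); (2) the supremum T⁺_{t₁,t₂}f(x₁) = sup_{y∈ℝⁿ}{f(y) − A_{t₁,t₂}(x₁,y)} is attained, and every maximizer y satisfies |y − x₁| ≤ λ₁(T,K)(t₂ − t₁). -/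

import Mathlib

open MeasureTheory Set Filter Topology intervalIntegral
open scoped RealInnerProductSpace ENNReal NNReal

noncomputable section

/-- Euclidean space `ℝⁿ`. -/
abbrev Euc (n : ℕ) : Type := EuclideanSpace ℝ (Fin n)

/-- `ξ` is absolutely continuous on `[a, b]`: it has a density `g` integrable on `[a,b]`,
which recovers `ξ` by integration and is almost everywhere the derivative of `ξ`. -/
def IsACOn {n : ℕ} (ξ : ℝ → Euc n) (a b : ℝ) : Prop :=
  ∃ g : ℝ → Euc n, IntervalIntegrable g volume a b ∧
    (∀ τ ∈ Icc a b, ξ τ = ξ a + ∫ σ in a..τ, g σ) ∧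
    (∀ᵐ τ ∂volume, τ ∈ Icc a b → HasDerivAt ξ (g τ) τ)

/-- A function `θ : [0, ∞) → [0, ∞)` is superlinear. -/
def Superlinear (θ : ℝ → ℝ) : Prop :=
  Tendsto (fun r => θ r / r) atTop atTop

/-- Action of a curve `ξ` on `[a,b]` for a time-dependent Lagrangian `L`. -/
def curveAction {n : ℕ} (L : ℝ → Euc n → Euc n → ℝ) (a b : ℝ) (ξ : ℝ → Euc n) : ℝ :=
  ∫ τ in a..b, L τ (ξ τ) (deriv ξ τ)

/-- Admissible curve for the fundamental solution `A_{s,t}(x,y)`. -/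
def IsAdmissible {n : ℕ} (L : ℝ → Euc n → Euc n → ℝ) (s t : ℝ) (x y : Euc n)
    (ξ : ℝ → Euc n) : Prop :=
  IsACOn ξ s t ∧ IntervalIntegrable (fun τ => L τ (ξ τ) (deriv ξ τ)) volume s t ∧
    ξ s = x ∧ ξ t = y

/-- The fundamental solution `A_{s,t}(x,y)`. -/
def fundSol {n : ℕ} (L : ℝ → Euc n → Euc n → ℝ) (s t : ℝ) (x y : Euc n) : ℝ :=
  sInf {r | ∃ ξ : ℝ → Euc n, IsAdmissible L s t x y ξ ∧ r = curveAction L s t ξ}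

/-- `ξ` is a minimizer for `A_{s,t}(x,y)`. -/
def IsMinimizer {n : ℕ} (L : ℝ → Euc n → Euc n → ℝ) (s t : ℝ) (x y : Euc n)
    (ξ : ℝ → Euc n) : Prop :=
  IsAdmissible L s t x y ξ ∧ curveAction L s t ξ = fundSol L s t x y ∧
    ∀ ζ : ℝ → Euc n, IsAdmissible L s t x y ζ → curveAction L s t ξ ≤ curveAction L s t ζ

/-- `L_v`, the gradient of `L` in the velocity variable. -/
def Lv {n : ℕ} (L : ℝ → Euc n → Euc n → ℝ) (s : ℝ) (x v : Euc n) : Euc n :=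
  gradient (fun w => L s x w) v

/-- `L_x`, the gradient of `L` in the space variable. -/
def Lx {n : ℕ} (L : ℝ → Euc n → Euc n → ℝ) (s : ℝ) (x v : Euc n) : Euc n :=
  gradient (fun y => L s y v) x

/-- The Hamiltonian associated with `L`: `H(s,x,p) = sup_v (⟨p,v⟩ - L(s,x,v))`. -/
def Ham {n : ℕ} (L : ℝ → Euc n → Euc n → ℝ) (s : ℝ) (x p : Euc n) : ℝ :=
  sSup {r | ∃ v : Euc n, r = ⟪p, v⟫ - L s x v}

/-- `H_p`, the gradient of the Hamiltonian in the momentum variable. -/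
def Hp {n : ℕ} (L : ℝ → Euc n → Euc n → ℝ) (s : ℝ) (x p : Euc n) : Euc n :=
  gradient (fun q => Ham L s x q) p

/-- `H_x`, the gradient of the Hamiltonian in the space variable. -/
def Hx {n : ℕ} (L : ℝ → Euc n → Euc n → ℝ) (s : ℝ) (x p : Euc n) : Euc n :=
  gradient (fun y => Ham L s y p) x

/-- (L1): `L_vv(s,x,v)` is positive definite. -/
def CondL1 {n : ℕ} (L : ℝ → Euc n → Euc n → ℝ) : Prop :=
  ∀ s : ℝ, 0 ≤ s → ∀ x v w : Euc n, w ≠ 0 →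
    0 < ⟪(fderiv ℝ (fun v' => Lv L s x v') v) w, w⟫

/-- (L2): uniform superlinear bounds on compact time intervals. -/
def CondL2 {n : ℕ} (L : ℝ → Euc n → Euc n → ℝ) : Prop :=
  ∀ T : ℝ, 0 < T → ∃ c : ℝ, 0 < c ∧ ∃ θbar θ : ℝ → ℝ,
    Monotone θbar ∧ Monotone θ ∧ (∀ r : ℝ, 0 ≤ r → 0 ≤ θbar r ∧ 0 ≤ θ r) ∧
    Superlinear θbar ∧ Superlinear θ ∧
    ∀ s ∈ Icc (0:ℝ) T, ∀ x v : Euc n, θ ‖v‖ - c ≤ L s x v ∧ L s x v ≤ θbar ‖v‖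

/-- (L3): bound on the time derivative of `L`. -/
def CondL3 {n : ℕ} (L : ℝ → Euc n → Euc n → ℝ) : Prop :=
  ∃ C1 C2 : ℝ → ℝ, (∀ t : ℝ, 0 ≤ t → 0 ≤ C1 t ∧ 0 ≤ C2 t) ∧
    (∀ K : Set ℝ, IsCompact K → BddAbove (C1 '' K) ∧ BddAbove (C2 '' K)) ∧
    ∀ T : ℝ, 0 < T → ∀ s ∈ Icc (0:ℝ) T, ∀ x v : Euc n,
      |deriv (fun σ => L σ x v) s| ≤ C1 T + C2 T * L s x v

/-- `L` is `C²` on `[0,∞)×ℝⁿ×ℝⁿ` and satisfies (L1)–(L3). -/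
def TonelliTD {n : ℕ} (L : ℝ → Euc n → Euc n → ℝ) : Prop :=
  ContDiffOn ℝ 2 (fun q : ℝ × Euc n × Euc n => L q.1 q.2.1 q.2.2)
      (Ici (0:ℝ) ×ˢ (univ : Set (Euc n × Euc n))) ∧
    CondL1 L ∧ CondL2 L ∧ CondL3 L

/-- Convex conjugate `θ*(s) = sup_{r ≥ 0} (r·s − θ(r))`. -/
def conjFn (θ : ℝ → ℝ) (s : ℝ) : ℝ :=
  sSup {r | ∃ v : ℝ, 0 ≤ v ∧ r = v * s - θ v}

namespace Stmt1Aux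

variable {n : ℕ}

lemma ae_ne_vol (c : ℝ) : ∀ᵐ τ : ℝ ∂volume, τ ≠ c := by
  rw [ae_iff]
  simpa using measure_singleton c

lemma ii_congr {E : Type*} [NormedAddCommGroup E] {f g : ℝ → E} {a b : ℝ}
    (hf : IntervalIntegrable f volume a b) (h : ∀ᵐ τ ∂volume, τ ∈ uIoc a b → f τ = g τ) :
    IntervalIntegrable g volume a b :=
  hf.congr_ae ((ae_restrict_iff' measurableSet_uIoc).mpr h)

lemma hasDerivAt_aff (z v : Euc n) (a τ : ℝ) :
    HasDerivAt (fun τ => z + (τ - a) • v) v τ := by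
  simpa using (((hasDerivAt_id τ).sub_const a).smul_const v).const_add z

lemma uIcc_sub {t1 t2 α β : ℝ} (h1 : t1 ≤ α) (h2 : α ≤ β) (h3 : β ≤ t2) :
    Set.uIcc α β ⊆ Set.uIcc t1 t2 := by
  rw [uIcc_of_le h2, uIcc_of_le ((h1.trans h2).trans h3)]
  exact Icc_subset_Icc h1 h3

lemma conj_ge {θ : ℝ → ℝ} {s : ℝ} (hs : 0 ≤ s) (hθmono : Monotone θ) (hθsl : Superlinear θ)
    {r : ℝ} (hr : 0 ≤ r) : r * s - θ r ≤ conjFn θ s := by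
  obtain ⟨R0, hR0⟩ := (hθsl.eventually_ge_atTop (s + 1)).exists_forall_of_atTop
  set R := max R0 1 with hR
  have hbdd : ∀ u ∈ {r | ∃ v : ℝ, 0 ≤ v ∧ r = v * s - θ v}, u ≤ max (R * s - θ 0) 0 := by
    rintro u ⟨v, hv, rfl⟩
    rcases le_or_gt v R with hvR | hvR
    · have h1 : θ 0 ≤ θ v := hθmono hv
      have h2 : v * s ≤ R * s := mul_le_mul_of_nonneg_right hvR hs
      exact le_trans (by linarith) (le_max_left _ _)
    · have h1 : (1:ℝ) ≤ v := le_trans (le_max_right R0 1) hvR.le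
      have hv0 : (0:ℝ) < v := lt_of_lt_of_le one_pos h1
      have h2 := hR0 v (le_trans (le_max_left R0 1) hvR.le)
      have hθv : (s + 1) * v ≤ θ v := (le_div_iff₀ hv0).mp h2
      nlinarith [le_max_right (R * s - θ 0) 0]
  exact le_csSup ⟨_, hbdd⟩ ⟨r, hr, rfl⟩

variable {L : ℝ → Euc n → Euc n → ℝ}

lemma contOn_comp
    (hLC : ContinuousOn (fun q : ℝ × Euc n × Euc n => L q.1 q.2.1 q.2.2)
      (Ici (0:ℝ) ×ˢ (univ : Set (Euc n × Euc n))))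
    {a b : ℝ} (ha : 0 ≤ a) {ξ v : ℝ → Euc n}
    (hξ : ContinuousOn ξ (Icc a b)) (hv : ContinuousOn v (Icc a b)) :
    ContinuousOn (fun τ => L τ (ξ τ) (v τ)) (Icc a b) := by
  have h1 : ContinuousOn (fun τ => ((τ, ξ τ, v τ) : ℝ × Euc n × Euc n)) (Icc a b) :=
    (continuousOn_id).prodMk (hξ.prodMk hv)
  exact hLC.comp h1 fun τ hτ => ⟨ha.trans hτ.1, mem_univ _⟩

variable {t1 t2 : ℝ} {ξ g : ℝ → Euc n}

lemma deriv_ae (h12 : t1 ≤ t2)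
    (hae : ∀ᵐ τ ∂volume, τ ∈ Icc t1 t2 → HasDerivAt ξ (g τ) τ) :
    ∀ᵐ τ ∂volume, τ ∈ uIoc t1 t2 → L τ (ξ τ) (deriv ξ τ) = L τ (ξ τ) (g τ) := by
  filter_upwards [hae] with τ h hτ
  rw [uIoc_of_le h12] at hτ
  rw [(h (Ioc_subset_Icc_self hτ)).deriv]

lemma action_eq (h12 : t1 ≤ t2)
    (hae : ∀ᵐ τ ∂volume, τ ∈ Icc t1 t2 → HasDerivAt ξ (g τ) τ) :
    curveAction L t1 t2 ξ = ∫ τ in t1..t2, L τ (ξ τ) (g τ) :=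
  intervalIntegral.integral_congr_ae (deriv_ae (L := L) h12 hae)

lemma integrand_II (h12 : t1 ≤ t2)
    (hae : ∀ᵐ τ ∂volume, τ ∈ Icc t1 t2 → HasDerivAt ξ (g τ) τ)
    (hLi : IntervalIntegrable (fun τ => L τ (ξ τ) (deriv ξ τ)) volume t1 t2) :
    IntervalIntegrable (fun τ => L τ (ξ τ) (g τ)) volume t1 t2 :=
  ii_congr hLi (deriv_ae (L := L) h12 hae)

lemma integral_piece (h12 : t1 ≤ t2)
    (hgi : IntervalIntegrable g volume t1 t2)
    (hgeq : ∀ τ ∈ Icc t1 t2, ξ τ = ξ t1 + ∫ σ in t1..τ, g σ)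
    {α β : ℝ} (h1 : t1 ≤ α) (h2 : α ≤ β) (h3 : β ≤ t2) :
    (∫ τ in α..β, g τ) = ξ β - ξ α := by
  have hA := hgeq α ⟨h1, h2.trans h3⟩
  have hB := hgeq β ⟨h1.trans h2, h3⟩
  have hadd := intervalIntegral.integral_add_adjacent_intervals
    (hgi.mono_set (uIcc_sub le_rfl h1 (h2.trans h3)))
    (hgi.mono_set (uIcc_sub h1 h2 h3))
  rw [hA, hB, ← hadd]
  abel

lemma piece_lb {θ θbar : ℝ → ℝ} {cT K T : ℝ} (hK : 0 ≤ K)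
    (hθmono : Monotone θ) (hθsl : Superlinear θ)
    (hbound : ∀ s ∈ Icc (0:ℝ) T, ∀ x v : Euc n, θ ‖v‖ - cT ≤ L s x v ∧ L s x v ≤ θbar ‖v‖)
    (h01 : 0 ≤ t1) (h2T : t2 ≤ T)
    (hgi : IntervalIntegrable g volume t1 t2)
    (hFi : IntervalIntegrable (fun τ => L τ (ξ τ) (g τ)) volume t1 t2)
    {α β : ℝ} (h1α : t1 ≤ α) (hαβ : α ≤ β) (hβ2 : β ≤ t2) :
    (K+1) * (∫ τ in α..β, ‖g τ‖) - (conjFn θ (K+1) + cT) * (β - α)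
      ≤ ∫ τ in α..β, L τ (ξ τ) (g τ) := by
  have hgα : IntervalIntegrable g volume α β := hgi.mono_set (uIcc_sub h1α hαβ hβ2)
  have hlow : ∀ τ ∈ Icc α β, (K+1) * ‖g τ‖ - (conjFn θ (K+1) + cT) ≤ L τ (ξ τ) (g τ) := by
    intro τ hτ
    have hτT : τ ∈ Icc (0:ℝ) T := ⟨h01.trans (h1α.trans hτ.1), (hτ.2.trans hβ2).trans h2T⟩
    have h1 := (hbound τ hτT (ξ τ) (g τ)).1
    have h2 := conj_ge (θ := θ) (by linarith : (0:ℝ) ≤ K+1) hθmono hθsl (norm_nonneg (g τ))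
    linarith [mul_comm (K+1) ‖g τ‖]
  have hLHSint : IntervalIntegrable (fun τ => (K+1) * ‖g τ‖ - (conjFn θ (K+1) + cT))
      volume α β := (hgα.norm.const_mul _).sub intervalIntegrable_const
  have hmono := intervalIntegral.integral_mono_on hαβ hLHSint
    (hFi.mono_set (uIcc_sub h1α hαβ hβ2)) hlow
  rw [intervalIntegral.integral_sub (hgα.norm.const_mul _) intervalIntegrable_const,
      intervalIntegral.integral_const_mul, intervalIntegral.integral_const, smul_eq_mul]
    at hmono
  linarith [hmono, mul_comm (β - α) (conjFn θ (K+1) + cT)]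

lemma aff_adm {θ θbar : ℝ → ℝ} {cT T : ℝ}
    (hLC : ContinuousOn (fun q : ℝ × Euc n × Euc n => L q.1 q.2.1 q.2.2)
      (Ici (0:ℝ) ×ˢ (univ : Set (Euc n × Euc n))))
    (hbound : ∀ s ∈ Icc (0:ℝ) T, ∀ x v : Euc n, θ ‖v‖ - cT ≤ L s x v ∧ L s x v ≤ θbar ‖v‖)
    (h01 : 0 ≤ t1) (h12 : t1 < t2) (h2T : t2 ≤ T) (z v : Euc n) :
    IsAdmissible L t1 t2 z (z + (t2 - t1) • v) (fun τ => z + (τ - t1) • v) ∧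
    curveAction L t1 t2 (fun τ => z + (τ - t1) • v) ≤ θbar ‖v‖ * (t2 - t1) := by
  set ξ : ℝ → Euc n := fun τ => z + (τ - t1) • v with hξdef
  have hder : ∀ τ, HasDerivAt ξ v τ := fun τ => hasDerivAt_aff z v t1 τ
  have hintg : (fun τ => L τ (ξ τ) (deriv ξ τ)) = fun τ => L τ (ξ τ) v := by
    funext τ
    rw [(hder τ).deriv]
  have hξcont : ContinuousOn ξ (Icc t1 t2) :=
    (continuous_const.add ((continuous_id.sub continuous_const).smul continuous_const)).continuousOn
  have hcont : ContinuousOn (fun τ => L τ (ξ τ) v) (Icc t1 t2) :=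
    contOn_comp hLC h01 hξcont continuousOn_const
  have hint : IntervalIntegrable (fun τ => L τ (ξ τ) v) volume t1 t2 := by
    apply ContinuousOn.intervalIntegrable
    rwa [uIcc_of_le h12.le]
  have hup : ∀ τ ∈ Icc t1 t2, L τ (ξ τ) v ≤ θbar ‖v‖ := fun τ hτ =>
    (hbound τ ⟨h01.trans hτ.1, hτ.2.trans h2T⟩ (ξ τ) v).2
  have ht1 : ξ t1 = z := by simp [hξdef]
  refine ⟨⟨⟨fun _ => v, intervalIntegrable_const, ?_, ?_⟩, ?_, ht1, rfl⟩, ?_⟩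
  · intro τ hτ
    rw [intervalIntegral.integral_const, ht1]
  · exact Eventually.of_forall fun τ _ => hder τ
  · rwa [hintg]
  · unfold curveAction
    rw [hintg]
    calc (∫ τ in t1..t2, L τ (ξ τ) v) ≤ ∫ _ in t1..t2, θbar ‖v‖ :=
          intervalIntegral.integral_mono_on h12.le hint intervalIntegrable_const hup
      _ = (t2 - t1) • θbar ‖v‖ := intervalIntegral.integral_const _
      _ = θbar ‖v‖ * (t2 - t1) := by rw [smul_eq_mul, mul_comm]

section FundSol

variable {θ θbar : ℝ → ℝ} {cT K T : ℝ}

lemma action_lb (hK : 0 ≤ K)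
    (hθmono : Monotone θ) (hθsl : Superlinear θ)
    (hbound : ∀ s ∈ Icc (0:ℝ) T, ∀ x v : Euc n, θ ‖v‖ - cT ≤ L s x v ∧ L s x v ≤ θbar ‖v‖)
    (h01 : 0 ≤ t1) (h12 : t1 ≤ t2) (h2T : t2 ≤ T)
    {z w : Euc n} {ξ : ℝ → Euc n} (hadm : IsAdmissible L t1 t2 z w ξ) :
    (K+1) * ‖w - z‖ - (conjFn θ (K+1) + cT) * (t2 - t1) ≤ curveAction L t1 t2 ξ := by
  obtain ⟨⟨g, hgi, hgeq, hgae⟩, hLi, hξ1, hξ2⟩ := hadm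
  have hFi := integrand_II (L := L) h12 hgae hLi
  have hpl := piece_lb hK hθmono hθsl hbound h01 h2T hgi hFi le_rfl h12 le_rfl
  have hI : (∫ τ in t1..t2, g τ) = w - z := by
    rw [integral_piece h12 hgi hgeq le_rfl h12 le_rfl, hξ1, hξ2]
  have hnorm : ‖w - z‖ ≤ ∫ τ in t1..t2, ‖g τ‖ := by
    rw [← hI]
    exact intervalIntegral.norm_integral_le_integral_norm h12
  have hmul : (K+1) * ‖w - z‖ ≤ (K+1) * ∫ τ in t1..t2, ‖g τ‖ :=
    mul_le_mul_of_nonneg_left hnorm (by linarith)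
  rw [action_eq (L := L) h12 hgae]
  linarith

lemma fundSol_ge (hK : 0 ≤ K)
    (hθmono : Monotone θ) (hθsl : Superlinear θ)
    (hbound : ∀ s ∈ Icc (0:ℝ) T, ∀ x v : Euc n, θ ‖v‖ - cT ≤ L s x v ∧ L s x v ≤ θbar ‖v‖)
    (hLC : ContinuousOn (fun q : ℝ × Euc n × Euc n => L q.1 q.2.1 q.2.2)
      (Ici (0:ℝ) ×ˢ (univ : Set (Euc n × Euc n))))
    (h01 : 0 ≤ t1) (h12 : t1 < t2) (h2T : t2 ≤ T) (z w : Euc n) :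
    (K+1) * ‖w - z‖ - (conjFn θ (K+1) + cT) * (t2 - t1) ≤ fundSol L t1 t2 z w := by
  apply le_csInf
  · refine ⟨curveAction L t1 t2 (fun τ => z + (τ - t1) • ((t2 - t1)⁻¹ • (w - z))), ?_⟩
    refine ⟨_, ?_, rfl⟩
    have := (aff_adm hLC hbound h01 h12 h2T z ((t2 - t1)⁻¹ • (w - z))).1
    rwa [smul_inv_smul₀ (sub_pos.mpr h12).ne', add_sub_cancel] at this
  · rintro r ⟨ξ, hadm, rfl⟩
    exact action_lb hK hθmono hθsl hbound h01 h12.le h2T hadm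

lemma fundSol_bddBelow (hK : 0 ≤ K)
    (hθmono : Monotone θ) (hθsl : Superlinear θ)
    (hbound : ∀ s ∈ Icc (0:ℝ) T, ∀ x v : Euc n, θ ‖v‖ - cT ≤ L s x v ∧ L s x v ≤ θbar ‖v‖)
    (h01 : 0 ≤ t1) (h12 : t1 ≤ t2) (h2T : t2 ≤ T) (z w : Euc n) :
    BddBelow {r | ∃ ξ : ℝ → Euc n, IsAdmissible L t1 t2 z w ξ ∧ r = curveAction L t1 t2 ξ} := by
  refine ⟨(K+1) * ‖w - z‖ - (conjFn θ (K+1) + cT) * (t2 - t1), ?_⟩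
  rintro r ⟨ξ, hadm, rfl⟩
  exact action_lb hK hθmono hθsl hbound h01 h12 h2T hadm

lemma fundSol_le (hK : 0 ≤ K)
    (hθmono : Monotone θ) (hθsl : Superlinear θ)
    (hbound : ∀ s ∈ Icc (0:ℝ) T, ∀ x v : Euc n, θ ‖v‖ - cT ≤ L s x v ∧ L s x v ≤ θbar ‖v‖)
    (h01 : 0 ≤ t1) (h12 : t1 ≤ t2) (h2T : t2 ≤ T)
    {z w : Euc n} {ξ : ℝ → Euc n} (hadm : IsAdmissible L t1 t2 z w ξ) :
    fundSol L t1 t2 z w ≤ curveAction L t1 t2 ξ :=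
  csInf_le (fundSol_bddBelow hK hθmono hθsl hbound h01 h12 h2T z w) ⟨ξ, hadm, rfl⟩

lemma fundSol_diag_le (hK : 0 ≤ K)
    (hθmono : Monotone θ) (hθsl : Superlinear θ)
    (hbound : ∀ s ∈ Icc (0:ℝ) T, ∀ x v : Euc n, θ ‖v‖ - cT ≤ L s x v ∧ L s x v ≤ θbar ‖v‖)
    (hLC : ContinuousOn (fun q : ℝ × Euc n × Euc n => L q.1 q.2.1 q.2.2)
      (Ici (0:ℝ) ×ˢ (univ : Set (Euc n × Euc n))))
    (h01 : 0 ≤ t1) (h12 : t1 < t2) (h2T : t2 ≤ T) (z : Euc n) :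
    fundSol L t1 t2 z z ≤ θbar 0 * (t2 - t1) := by
  have h := aff_adm hLC hbound h01 h12 h2T z 0
  rw [smul_zero, add_zero, norm_zero] at h
  exact le_trans (fundSol_le hK hθmono hθsl hbound h01 h12.le h2T h.1) h.2

end FundSol

section Splice

variable {θ θbar : ℝ → ℝ} {cT T : ℝ}

lemma leftSplice
    (hLC : ContinuousOn (fun q : ℝ × Euc n × Euc n => L q.1 q.2.1 q.2.2)
      (Ici (0:ℝ) ×ˢ (univ : Set (Euc n × Euc n))))
    (hbound : ∀ s ∈ Icc (0:ℝ) T, ∀ x v : Euc n, θ ‖v‖ - cT ≤ L s x v ∧ L s x v ≤ θbar ‖v‖)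
    (h01 : 0 ≤ t1) (h12 : t1 < t2) (h2T : t2 ≤ T)
    {x2 : Euc n}
    (hgi : IntervalIntegrable g volume t1 t2)
    (hgeq : ∀ τ ∈ Icc t1 t2, ξ τ = ξ t1 + ∫ σ in t1..τ, g σ)
    (hgae : ∀ᵐ τ ∂volume, τ ∈ Icc t1 t2 → HasDerivAt ξ (g τ) τ)
    (hLi : IntervalIntegrable (fun τ => L τ (ξ τ) (deriv ξ τ)) volume t1 t2)
    (hξ2 : ξ t2 = x2)
    (z : Euc n) {δ : ℝ} (hδ0 : 0 < δ) (hδ : δ ≤ t2 - t1) :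
    ∃ η : ℝ → Euc n, IsAdmissible L t1 t2 z x2 η ∧
      curveAction L t1 t2 η ≤ θbar (‖ξ (t1 + δ) - z‖ / δ) * δ +
        (curveAction L t1 t2 ξ - ∫ τ in t1..(t1+δ), L τ (ξ τ) (g τ)) := by
  set c := t1 + δ with hcdef
  have hc1 : t1 < c := by simp [hcdef, hδ0]
  have hc2 : c ≤ t2 := by simp only [hcdef]; linarith
  have hct1 : c - t1 = δ := by simp [hcdef]
  set p := ξ c with hpdef
  set v : Euc n := δ⁻¹ • (p - z) with hvdef
  set η : ℝ → Euc n := fun τ => if τ < c then z + (τ - t1) • v else ξ τ with hηdef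
  set gη : ℝ → Euc n := fun τ => if τ < c then v else g τ with hgηdef
  have hnv : ‖v‖ = ‖p - z‖ / δ := by
    rw [hvdef, norm_smul, norm_inv, Real.norm_eq_abs, abs_of_pos hδ0, ← div_eq_inv_mul]
  have hδv : z + δ • v = p := by
    rw [hvdef, smul_inv_smul₀ hδ0.ne', add_sub_cancel]
  have hη_t1 : η t1 = z := by
    simp [hηdef, if_pos hc1]
  have hη_ge : ∀ τ, c ≤ τ → η τ = ξ τ := fun τ h => if_neg (not_lt.mpr h)
  have hη_lt : ∀ τ, τ < c → η τ = z + (τ - t1) • v := fun τ h => if_pos h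
  have hgη_lt : ∀ τ, τ < c → gη τ = v := fun τ h => if_pos h
  have hgη_ge : ∀ τ, c ≤ τ → gη τ = g τ := fun τ h => if_neg (not_lt.mpr h)
  have hη_t2 : η t2 = x2 := by rw [hη_ge t2 hc2, hξ2]
  -- integrability of gη
  have hgη1 : IntervalIntegrable gη volume t1 c := by
    refine ii_congr (intervalIntegrable_const (c := v)) ?_
    filter_upwards [ae_ne_vol c] with τ hτne hτ
    rw [uIoc_of_le hc1.le] at hτ
    exact (hgη_lt τ (lt_of_le_of_ne hτ.2 hτne)).symm
  have hgη2 : IntervalIntegrable gη volume c t2 := by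
    refine ii_congr (hgi.mono_set (uIcc_sub hc1.le hc2 le_rfl)) ?_
    refine Eventually.of_forall fun τ hτ => ?_
    rw [uIoc_of_le hc2] at hτ
    exact (hgη_ge τ hτ.1.le).symm
  have hgηt : IntervalIntegrable gη volume t1 t2 := hgη1.trans hgη2
  -- the integral identity
  have hI1 : (∫ σ in t1..c, gη σ) = δ • v := by
    rw [intervalIntegral.integral_congr_ae (g := fun _ => v) ?_, intervalIntegral.integral_const,
      hct1]
    filter_upwards [ae_ne_vol c] with σ hσne hσ
    rw [uIoc_of_le hc1.le] at hσ
    exact hgη_lt σ (lt_of_le_of_ne hσ.2 hσne)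
  have hid : ∀ τ ∈ Icc t1 t2, η τ = η t1 + ∫ σ in t1..τ, gη σ := by
    intro τ hτ
    rw [hη_t1]
    rcases lt_or_ge τ c with hτc | hτc
    · rw [hη_lt τ hτc, intervalIntegral.integral_congr (g := fun _ => v) ?_,
        intervalIntegral.integral_const]
      intro σ hσ
      rw [uIcc_of_le hτ.1] at hσ
      exact hgη_lt σ (lt_of_le_of_lt hσ.2 hτc)
    · have hI2 : (∫ σ in c..τ, gη σ) = ∫ σ in c..τ, g σ := by
        refine intervalIntegral.integral_congr fun σ hσ => ?_
        rw [uIcc_of_le hτc] at hσ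
        exact hgη_ge σ hσ.1
      have hI3 : (∫ σ in c..τ, g σ) = ξ τ - ξ c :=
        integral_piece h12.le hgi hgeq hc1.le hτc hτ.2
      rw [← intervalIntegral.integral_add_adjacent_intervals hgη1
          (hgη2.mono_set (uIcc_sub le_rfl hτc hτ.2)), hI1, hI2, hI3, hη_ge τ hτc,
        ← add_assoc, hδv]
      abel
  -- a.e. derivative
  have hηae : ∀ᵐ τ ∂volume, τ ∈ Icc t1 t2 → HasDerivAt η (gη τ) τ := by
    filter_upwards [hgae, ae_ne_vol c] with τ hξd hτne hτmem
    rcases lt_or_gt_of_ne hτne with hlt | hgt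
    · rw [hgη_lt τ hlt]
      refine (hasDerivAt_aff z v t1 τ).congr_of_eventuallyEq ?_
      filter_upwards [Iio_mem_nhds hlt] with σ hσ
      exact hη_lt σ hσ
    · rw [hgη_ge τ hgt.le]
      refine (hξd hτmem).congr_of_eventuallyEq ?_
      filter_upwards [Ioi_mem_nhds hgt] with σ hσ
      exact hη_ge σ (le_of_lt hσ)
  -- integrand integrability
  have hFξi : IntervalIntegrable (fun τ => L τ (ξ τ) (g τ)) volume t1 t2 :=
    integrand_II (L := L) h12.le hgae hLi
  have hA1cont : ContinuousOn (fun τ => L τ (z + (τ - t1) • v) v) (Icc t1 c) :=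
    contOn_comp hLC h01
      (continuous_const.add ((continuous_id.sub continuous_const).smul continuous_const)).continuousOn
      continuousOn_const
  have hA1i : IntervalIntegrable (fun τ => L τ (z + (τ - t1) • v) v) volume t1 c := by
    apply ContinuousOn.intervalIntegrable
    rwa [uIcc_of_le hc1.le]
  have hFη1 : IntervalIntegrable (fun τ => L τ (η τ) (gη τ)) volume t1 c := by
    refine ii_congr hA1i ?_
    filter_upwards [ae_ne_vol c] with τ hτne hτ
    rw [uIoc_of_le hc1.le] at hτ
    have hlt : τ < c := lt_of_le_of_ne hτ.2 hτne
    rw [hη_lt τ hlt, hgη_lt τ hlt]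
  have hFη2 : IntervalIntegrable (fun τ => L τ (η τ) (gη τ)) volume c t2 := by
    refine ii_congr (hFξi.mono_set (uIcc_sub hc1.le hc2 le_rfl)) ?_
    refine Eventually.of_forall fun τ hτ => ?_
    rw [uIoc_of_le hc2] at hτ
    rw [hη_ge τ hτ.1.le, hgη_ge τ hτ.1.le]
  have hFηt : IntervalIntegrable (fun τ => L τ (η τ) (gη τ)) volume t1 t2 := hFη1.trans hFη2
  have hηLi : IntervalIntegrable (fun τ => L τ (η τ) (deriv η τ)) volume t1 t2 := by
    refine ii_congr hFηt ?_
    filter_upwards [hηae] with τ hτd hτ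
    rw [uIoc_of_le h12.le] at hτ
    rw [(hτd (Ioc_subset_Icc_self hτ)).deriv]
  refine ⟨η, ⟨⟨gη, hgηt, hid, hηae⟩, hηLi, hη_t1, hη_t2⟩, ?_⟩
  -- action estimate
  have hact : curveAction L t1 t2 η = (∫ τ in t1..c, L τ (η τ) (gη τ))
      + ∫ τ in c..t2, L τ (η τ) (gη τ) := by
    rw [action_eq (L := L) h12.le hηae,
      intervalIntegral.integral_add_adjacent_intervals hFη1 hFη2]
  have hpiece1 : (∫ τ in t1..c, L τ (η τ) (gη τ)) ≤ θbar ‖v‖ * δ := by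
    have he : (∫ τ in t1..c, L τ (η τ) (gη τ)) = ∫ τ in t1..c, L τ (z + (τ - t1) • v) v := by
      refine intervalIntegral.integral_congr_ae ?_
      filter_upwards [ae_ne_vol c] with τ hτne hτ
      rw [uIoc_of_le hc1.le] at hτ
      have hlt : τ < c := lt_of_le_of_ne hτ.2 hτne
      rw [hη_lt τ hlt, hgη_lt τ hlt]
    rw [he]
    calc (∫ τ in t1..c, L τ (z + (τ - t1) • v) v) ≤ ∫ _ in t1..c, θbar ‖v‖ := by
          refine intervalIntegral.integral_mono_on hc1.le hA1i intervalIntegrable_const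
            fun τ hτ => ?_
          exact (hbound τ ⟨h01.trans hτ.1, (hτ.2.trans hc2).trans h2T⟩ _ v).2
      _ = θbar ‖v‖ * δ := by rw [intervalIntegral.integral_const, hct1, smul_eq_mul, mul_comm]
  have hpiece2 : (∫ τ in c..t2, L τ (η τ) (gη τ))
      = curveAction L t1 t2 ξ - ∫ τ in t1..c, L τ (ξ τ) (g τ) := by
    have he : (∫ τ in c..t2, L τ (η τ) (gη τ)) = ∫ τ in c..t2, L τ (ξ τ) (g τ) := by
      refine intervalIntegral.integral_congr fun τ hτ => ?_
      rw [uIcc_of_le hc2] at hτ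
      rw [hη_ge τ hτ.1, hgη_ge τ hτ.1]
    have hadd := intervalIntegral.integral_add_adjacent_intervals
      (hFξi.mono_set (uIcc_sub le_rfl hc1.le hc2))
      (hFξi.mono_set (uIcc_sub hc1.le hc2 le_rfl))
    rw [he, action_eq (L := L) h12.le hgae, ← hadd]
    ring
  rw [hact, hpiece2, ← hnv]
  linarith

lemma rightSplice
    (hLC : ContinuousOn (fun q : ℝ × Euc n × Euc n => L q.1 q.2.1 q.2.2)
      (Ici (0:ℝ) ×ˢ (univ : Set (Euc n × Euc n))))
    (hbound : ∀ s ∈ Icc (0:ℝ) T, ∀ x v : Euc n, θ ‖v‖ - cT ≤ L s x v ∧ L s x v ≤ θbar ‖v‖)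
    (h01 : 0 ≤ t1) (h12 : t1 < t2) (h2T : t2 ≤ T)
    {x1 : Euc n}
    (hgi : IntervalIntegrable g volume t1 t2)
    (hgeq : ∀ τ ∈ Icc t1 t2, ξ τ = ξ t1 + ∫ σ in t1..τ, g σ)
    (hgae : ∀ᵐ τ ∂volume, τ ∈ Icc t1 t2 → HasDerivAt ξ (g τ) τ)
    (hLi : IntervalIntegrable (fun τ => L τ (ξ τ) (deriv ξ τ)) volume t1 t2)
    (hξ1 : ξ t1 = x1)
    (y : Euc n) {δ : ℝ} (hδ0 : 0 < δ) (hδ : δ ≤ t2 - t1) :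
    ∃ η : ℝ → Euc n, IsAdmissible L t1 t2 x1 y η ∧
      curveAction L t1 t2 η ≤ θbar (‖y - ξ (t2 - δ)‖ / δ) * δ +
        (curveAction L t1 t2 ξ - ∫ τ in (t2-δ)..t2, L τ (ξ τ) (g τ)) := by
  set c := t2 - δ with hcdef
  have hc1 : t1 ≤ c := by simp only [hcdef]; linarith
  have hc2 : c < t2 := by simp only [hcdef]; linarith
  have hct2 : t2 - c = δ := by simp [hcdef]
  set q := ξ c with hqdef
  set v : Euc n := δ⁻¹ • (y - q) with hvdef
  set η : ℝ → Euc n := fun τ => if c < τ then q + (τ - c) • v else ξ τ with hηdef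
  set gη : ℝ → Euc n := fun τ => if c < τ then v else g τ with hgηdef
  have hnv : ‖v‖ = ‖y - q‖ / δ := by
    rw [hvdef, norm_smul, norm_inv, Real.norm_eq_abs, abs_of_pos hδ0, ← div_eq_inv_mul]
  have hδv : q + δ • v = y := by
    rw [hvdef, smul_inv_smul₀ hδ0.ne', add_sub_cancel]
  have hη_le : ∀ τ, τ ≤ c → η τ = ξ τ := fun τ h => if_neg (not_lt.mpr h)
  have hη_gt : ∀ τ, c < τ → η τ = q + (τ - c) • v := fun τ h => if_pos h
  have hgη_le : ∀ τ, τ ≤ c → gη τ = g τ := fun τ h => if_neg (not_lt.mpr h)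
  have hgη_gt : ∀ τ, c < τ → gη τ = v := fun τ h => if_pos h
  have hη_t1 : η t1 = x1 := by rw [hη_le t1 hc1, hξ1]
  have hη_t2 : η t2 = y := by rw [hη_gt t2 hc2, hct2, hδv]
  -- integrability of gη
  have hgη1 : IntervalIntegrable gη volume t1 c := by
    refine ii_congr (hgi.mono_set (uIcc_sub le_rfl hc1 hc2.le)) ?_
    refine Eventually.of_forall fun τ hτ => ?_
    rw [uIoc_of_le hc1] at hτ
    exact (hgη_le τ hτ.2).symm
  have hgη2 : IntervalIntegrable gη volume c t2 := by
    refine ii_congr (intervalIntegrable_const (c := v)) ?_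
    refine Eventually.of_forall fun τ hτ => ?_
    rw [uIoc_of_le hc2.le] at hτ
    exact (hgη_gt τ hτ.1).symm
  have hgηt : IntervalIntegrable gη volume t1 t2 := hgη1.trans hgη2
  -- integral identity
  have hIg : ∀ τ, t1 ≤ τ → τ ≤ c → (∫ σ in t1..τ, gη σ) = ∫ σ in t1..τ, g σ := by
    intro τ h1 h2
    refine intervalIntegral.integral_congr fun σ hσ => ?_
    rw [uIcc_of_le h1] at hσ
    exact hgη_le σ (hσ.2.trans h2)
  have hid : ∀ τ ∈ Icc t1 t2, η τ = η t1 + ∫ σ in t1..τ, gη σ := by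
    intro τ hτ
    rw [hη_t1, ← hξ1]
    rcases le_or_gt τ c with hτc | hτc
    · rw [hη_le τ hτc, hIg τ hτ.1 hτc,
        integral_piece h12.le hgi hgeq le_rfl hτ.1 (hτc.trans hc2.le)]
      abel
    · have hI1 : (∫ σ in t1..c, gη σ) = ξ c - ξ t1 := by
        rw [hIg c hc1 le_rfl, integral_piece h12.le hgi hgeq le_rfl hc1 hc2.le]
      have hI2 : (∫ σ in c..τ, gη σ) = (τ - c) • v := by
        rw [intervalIntegral.integral_congr_ae (g := fun _ => v) ?_,
          intervalIntegral.integral_const]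
        refine Eventually.of_forall fun σ hσ => ?_
        rw [uIoc_of_le hτc.le] at hσ
        exact hgη_gt σ hσ.1
      rw [← intervalIntegral.integral_add_adjacent_intervals hgη1
          (hgη2.mono_set (uIcc_sub le_rfl hτc.le hτ.2)), hI1, hI2, hη_gt τ hτc]
      abel
  -- a.e. derivative
  have hηae : ∀ᵐ τ ∂volume, τ ∈ Icc t1 t2 → HasDerivAt η (gη τ) τ := by
    filter_upwards [hgae, ae_ne_vol c] with τ hξd hτne hτmem
    rcases lt_or_gt_of_ne hτne with hlt | hgt
    · rw [hgη_le τ hlt.le]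
      refine (hξd hτmem).congr_of_eventuallyEq ?_
      filter_upwards [Iio_mem_nhds hlt] with σ hσ
      exact hη_le σ (le_of_lt hσ)
    · rw [hgη_gt τ hgt]
      refine (hasDerivAt_aff q v c τ).congr_of_eventuallyEq ?_
      filter_upwards [Ioi_mem_nhds hgt] with σ hσ
      exact hη_gt σ hσ
  -- integrand integrability
  have hFξi : IntervalIntegrable (fun τ => L τ (ξ τ) (g τ)) volume t1 t2 :=
    integrand_II (L := L) h12.le hgae hLi
  have hA1cont : ContinuousOn (fun τ => L τ (q + (τ - c) • v) v) (Icc c t2) :=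
    contOn_comp hLC (h01.trans hc1)
      (continuous_const.add ((continuous_id.sub continuous_const).smul continuous_const)).continuousOn
      continuousOn_const
  have hA1i : IntervalIntegrable (fun τ => L τ (q + (τ - c) • v) v) volume c t2 := by
    apply ContinuousOn.intervalIntegrable
    rwa [uIcc_of_le hc2.le]
  have hFη1 : IntervalIntegrable (fun τ => L τ (η τ) (gη τ)) volume t1 c := by
    refine ii_congr (hFξi.mono_set (uIcc_sub le_rfl hc1 hc2.le)) ?_
    refine Eventually.of_forall fun τ hτ => ?_
    rw [uIoc_of_le hc1] at hτ
    rw [hη_le τ hτ.2, hgη_le τ hτ.2]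
  have hFη2 : IntervalIntegrable (fun τ => L τ (η τ) (gη τ)) volume c t2 := by
    refine ii_congr hA1i ?_
    refine Eventually.of_forall fun τ hτ => ?_
    rw [uIoc_of_le hc2.le] at hτ
    rw [hη_gt τ hτ.1, hgη_gt τ hτ.1]
  have hFηt : IntervalIntegrable (fun τ => L τ (η τ) (gη τ)) volume t1 t2 := hFη1.trans hFη2
  have hηLi : IntervalIntegrable (fun τ => L τ (η τ) (deriv η τ)) volume t1 t2 := by
    refine ii_congr hFηt ?_
    filter_upwards [hηae] with τ hτd hτ
    rw [uIoc_of_le h12.le] at hτ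
    rw [(hτd (Ioc_subset_Icc_self hτ)).deriv]
  refine ⟨η, ⟨⟨gη, hgηt, hid, hηae⟩, hηLi, hη_t1, hη_t2⟩, ?_⟩
  -- action estimate
  have hact : curveAction L t1 t2 η = (∫ τ in t1..c, L τ (η τ) (gη τ))
      + ∫ τ in c..t2, L τ (η τ) (gη τ) := by
    rw [action_eq (L := L) h12.le hηae,
      intervalIntegral.integral_add_adjacent_intervals hFη1 hFη2]
  have hpiece2 : (∫ τ in c..t2, L τ (η τ) (gη τ)) ≤ θbar ‖v‖ * δ := by
    have he : (∫ τ in c..t2, L τ (η τ) (gη τ)) = ∫ τ in c..t2, L τ (q + (τ - c) • v) v := by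
      refine intervalIntegral.integral_congr_ae (Eventually.of_forall fun τ hτ => ?_)
      rw [uIoc_of_le hc2.le] at hτ
      rw [hη_gt τ hτ.1, hgη_gt τ hτ.1]
    rw [he]
    calc (∫ τ in c..t2, L τ (q + (τ - c) • v) v) ≤ ∫ _ in c..t2, θbar ‖v‖ := by
          refine intervalIntegral.integral_mono_on hc2.le hA1i intervalIntegrable_const
            fun τ hτ => ?_
          exact (hbound τ ⟨(h01.trans hc1).trans hτ.1, hτ.2.trans h2T⟩ _ v).2
      _ = θbar ‖v‖ * δ := by rw [intervalIntegral.integral_const, hct2, smul_eq_mul, mul_comm]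
  have hpiece1 : (∫ τ in t1..c, L τ (η τ) (gη τ))
      = curveAction L t1 t2 ξ - ∫ τ in c..t2, L τ (ξ τ) (g τ) := by
    have he : (∫ τ in t1..c, L τ (η τ) (gη τ)) = ∫ τ in t1..c, L τ (ξ τ) (g τ) := by
      refine intervalIntegral.integral_congr fun τ hτ => ?_
      rw [uIcc_of_le hc1] at hτ
      rw [hη_le τ hτ.2, hgη_le τ hτ.2]
    have hadd := intervalIntegral.integral_add_adjacent_intervals
      (hFξi.mono_set (uIcc_sub le_rfl hc1 hc2.le))
      (hFξi.mono_set (uIcc_sub hc1 hc2.le le_rfl))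
    rw [he, action_eq (L := L) h12.le hgae, ← hadd]
    ring
  rw [hact, hpiece1, ← hnv]
  linarith

end Splice

section Main

variable {θ θbar : ℝ → ℝ} {cT K T : ℝ} {f : Euc n → ℝ}

lemma adm_nonempty
    (hLC : ContinuousOn (fun q : ℝ × Euc n × Euc n => L q.1 q.2.1 q.2.2)
      (Ici (0:ℝ) ×ˢ (univ : Set (Euc n × Euc n))))
    (hbound : ∀ s ∈ Icc (0:ℝ) T, ∀ x v : Euc n, θ ‖v‖ - cT ≤ L s x v ∧ L s x v ≤ θbar ‖v‖)
    {t1 t2 : ℝ} (h01 : 0 ≤ t1) (h12 : t1 < t2) (h2T : t2 ≤ T) (z w : Euc n) :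
    {r | ∃ ξ : ℝ → Euc n, IsAdmissible L t1 t2 z w ξ ∧ r = curveAction L t1 t2 ξ}.Nonempty := by
  refine ⟨curveAction L t1 t2 (fun τ => z + (τ - t1) • ((t2 - t1)⁻¹ • (w - z))), _, ?_, rfl⟩
  have := (aff_adm hLC hbound h01 h12 h2T z ((t2 - t1)⁻¹ • (w - z))).1
  rwa [smul_inv_smul₀ (sub_pos.mpr h12).ne', add_sub_cancel] at this

lemma exists_min
    (hLC : ContinuousOn (fun q : ℝ × Euc n × Euc n => L q.1 q.2.1 q.2.2)
      (Ici (0:ℝ) ×ˢ (univ : Set (Euc n × Euc n))))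
    (hK : 0 ≤ K) (hf : ∀ x y : Euc n, |f x - f y| ≤ K * ‖x - y‖)
    (hθmono : Monotone θ) (hθbmono : Monotone θbar) (hθsl : Superlinear θ)
    (hbound : ∀ s ∈ Icc (0:ℝ) T, ∀ x v : Euc n, θ ‖v‖ - cT ≤ L s x v ∧ L s x v ≤ θbar ‖v‖)
    {t1 t2 : ℝ} (h01 : 0 ≤ t1) (h12 : t1 < t2) (h2T : t2 ≤ T) (x2 : Euc n) :
    ∃ z : Euc n, ∀ w : Euc n,
      f z + fundSol L t1 t2 z x2 ≤ f w + fundSol L t1 t2 w x2 := by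
  classical
  set hfun : Euc n → ℝ := fun w => f w + fundSol L t1 t2 w x2 with hfun_def
  have hfs_ge : ∀ w : Euc n,
      (K+1) * ‖x2 - w‖ - (conjFn θ (K+1) + cT) * (t2 - t1) ≤ fundSol L t1 t2 w x2 :=
    fun w => fundSol_ge hK hθmono hθsl hbound hLC h01 h12 h2T w x2
  have hh_lb : ∀ w, f x2 + ‖x2 - w‖ - (conjFn θ (K+1) + cT) * (t2 - t1) ≤ hfun w := by
    intro w
    have h1 := hfs_ge w
    have h2 : f x2 - f w ≤ K * ‖x2 - w‖ := le_trans (le_abs_self _) (hf x2 w)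
    have h3 := norm_nonneg (x2 - w)
    simp only [hfun_def]
    nlinarith
  have hbb : BddBelow (Set.range hfun) := by
    refine ⟨f x2 - (conjFn θ (K+1) + cT) * (t2 - t1), ?_⟩
    rintro r ⟨w, rfl⟩
    have h1 := hh_lb w
    have h2 := norm_nonneg (x2 - w)
    linarith
  set m := sInf (Set.range hfun) with hm
  have hm_le : ∀ w, m ≤ hfun w := fun w => csInf_le hbb ⟨w, rfl⟩
  have hseq : ∀ k : ℕ, ∃ (w : Euc n) (ξ g : ℝ → Euc n),
      IntervalIntegrable g volume t1 t2 ∧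
      (∀ τ ∈ Icc t1 t2, ξ τ = ξ t1 + ∫ σ in t1..τ, g σ) ∧
      (∀ᵐ τ ∂volume, τ ∈ Icc t1 t2 → HasDerivAt ξ (g τ) τ) ∧
      IntervalIntegrable (fun τ => L τ (ξ τ) (deriv ξ τ)) volume t1 t2 ∧
      ξ t1 = w ∧ ξ t2 = x2 ∧
      f w + curveAction L t1 t2 ξ ≤ m + 2/((k:ℝ)+1) := by
    intro k
    have hε : (0:ℝ) < 1/((k:ℝ)+1) := by positivity
    obtain ⟨r, ⟨w, rfl⟩, hr⟩ := Real.lt_sInf_add_pos (Set.range_nonempty hfun) hε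
    obtain ⟨r', ⟨ξ, hadm, rfl⟩, hr'⟩ :=
      Real.lt_sInf_add_pos (adm_nonempty hLC hbound h01 h12 h2T w x2) hε
    obtain ⟨⟨g, h1, h2, h3⟩, h4, h5, h6⟩ := hadm
    refine ⟨w, ξ, g, h1, h2, h3, h4, h5, h6, ?_⟩
    have hfd : fundSol L t1 t2 w x2 = sInf {r | ∃ ξ : ℝ → Euc n,
        IsAdmissible L t1 t2 w x2 ξ ∧ r = curveAction L t1 t2 ξ} := rfl
    simp only [hfun_def] at hr
    have h2e : 2/((k:ℝ)+1) = 1/((k:ℝ)+1) + 1/((k:ℝ)+1) := by ring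
    rw [h2e]
    rw [← hfd] at hr'
    rw [← hm] at hr
    linarith
  choose w ξs gs hgi hgeq hgae hLis he1 he2 hmin using hseq
  have htame : ∀ k : ℕ, ∀ σ, t1 < σ → σ ≤ t2 →
      (∫ τ in t1..σ, ‖gs k τ‖)
        ≤ (conjFn θ (K+1) + cT + θbar 0) * (σ - t1) + 2/((k:ℝ)+1) := by
    intro k σ hσ1 hσ2
    have hδ0 : (0:ℝ) < σ - t1 := by linarith
    have hδle : σ - t1 ≤ t2 - t1 := by linarith
    obtain ⟨η, hadm, hact⟩ := leftSplice hLC hbound h01 h12 h2T (hgi k) (hgeq k) (hgae k)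
      (hLis k) (he2 k) (ξs k σ) hδ0 hδle
    rw [show t1 + (σ - t1) = σ from by ring, sub_self, norm_zero, zero_div] at hact
    have h1 : m ≤ f (ξs k σ) + curveAction L t1 t2 η := by
      have h2 := fundSol_le hK hθmono hθsl hbound h01 h12.le h2T hadm
      have h3 := hm_le (ξs k σ)
      simp only [hfun_def] at h3
      linarith
    have hW : (∫ τ in t1..σ, gs k τ) = ξs k σ - w k := by
      rw [integral_piece h12.le (hgi k) (hgeq k) le_rfl hσ1.le hσ2, he1 k]
    have hnormW : ‖ξs k σ - w k‖ ≤ ∫ τ in t1..σ, ‖gs k τ‖ := by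
      rw [← hW]
      exact intervalIntegral.norm_integral_le_integral_norm hσ1.le
    have hfW : f (ξs k σ) - f (w k) ≤ K * ∫ τ in t1..σ, ‖gs k τ‖ :=
      le_trans (le_trans (le_abs_self _) (hf _ _)) (mul_le_mul_of_nonneg_left hnormW hK)
    have hFi := integrand_II (L := L) h12.le (hgae k) (hLis k)
    have hpl := piece_lb hK hθmono hθsl hbound h01 h2T (hgi k) hFi le_rfl hσ1.le hσ2
    have hfin := hmin k
    linarith
  have hwb : ∀ k : ℕ, w k ∈ Metric.closedBall x2
      (m + 2 - f x2 + (conjFn θ (K+1) + cT) * (t2 - t1)) := by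
    intro k
    have h1 := hmin k
    have hadm : IsAdmissible L t1 t2 (w k) x2 (ξs k) :=
      ⟨⟨gs k, hgi k, hgeq k, hgae k⟩, hLis k, he1 k, he2 k⟩
    have h2 := fundSol_le hK hθmono hθsl hbound h01 h12.le h2T hadm
    have h3 := hh_lb (w k)
    have h4 : 2/((k:ℝ)+1) ≤ 2 := by
      rw [div_le_iff₀ (by positivity)]
      have h5 : (0:ℝ) ≤ (k:ℝ) := Nat.cast_nonneg k
      linarith
    rw [Metric.mem_closedBall, dist_eq_norm, norm_sub_rev]
    simp only [hfun_def] at h3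
    linarith
  obtain ⟨zs, hzsmem, φ, hφmono, hφtend⟩ :=
    (isCompact_closedBall x2 _).tendsto_subseq hwb
  have hkey : ∀ ε : ℝ, 0 < ε → ε ≤ t2 - t1 →
      hfun zs ≤ m + (1 + K + θbar (conjFn θ (K+1) + cT + θbar 0 + 1)
        + conjFn θ (K+1) + cT) * ε := by
    intro ε hε0 hεΔ
    have hev1 : ∀ᶠ k : ℕ in atTop, dist ((w ∘ φ) k) zs < ε/2 :=
      (Metric.tendsto_nhds.mp hφtend) (ε/2) (by positivity)
    have hφtop : Tendsto (fun k : ℕ => ((φ k : ℝ)) + 1) atTop atTop :=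
      tendsto_atTop_add_const_right _ 1 (tendsto_natCast_atTop_atTop.comp hφmono.tendsto_atTop)
    have hev2 : ∀ᶠ k : ℕ in atTop, 2/((φ k:ℝ)+1) ≤ ε/2 := by
      filter_upwards [hφtop.eventually_ge_atTop (4/ε)] with k hk
      rw [div_le_iff₀ (by positivity : (0:ℝ) < (φ k:ℝ)+1)]
      have h5 : ε/2 * (4/ε) ≤ ε/2 * ((φ k:ℝ)+1) := mul_le_mul_of_nonneg_left hk (by positivity)
      have h42 : ε/2 * (4/ε) = 2 := by field_simp; ring
      linarith
    obtain ⟨k, hk1, hk2⟩ := (hev1.and hev2).exists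
    obtain ⟨η, hadm, hact⟩ := leftSplice hLC hbound h01 h12 h2T (hgi (φ k)) (hgeq (φ k))
      (hgae (φ k)) (hLis (φ k)) (he2 (φ k)) zs hε0 hεΔ
    have htm := htame (φ k) (t1 + ε) (by linarith) (by linarith)
    rw [show t1 + ε - t1 = ε from by ring] at htm
    have hW : (∫ τ in t1..(t1+ε), gs (φ k) τ) = ξs (φ k) (t1+ε) - w (φ k) := by
      rw [integral_piece h12.le (hgi (φ k)) (hgeq (φ k)) le_rfl (by linarith) (by linarith),
        he1 (φ k)]
    have hnormW : ‖ξs (φ k) (t1+ε) - w (φ k)‖ ≤ ∫ τ in t1..(t1+ε), ‖gs (φ k) τ‖ := by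
      rw [← hW]
      exact intervalIntegral.norm_integral_le_integral_norm (by linarith)
    have hdist : ‖w (φ k) - zs‖ < ε/2 := by
      rw [← dist_eq_norm]
      exact hk1
    have hP : ‖ξs (φ k) (t1+ε) - zs‖ ≤ (conjFn θ (K+1) + cT + θbar 0 + 1) * ε := by
      have htri := dist_triangle (ξs (φ k) (t1+ε)) (w (φ k)) zs
      rw [dist_eq_norm, dist_eq_norm, dist_eq_norm] at htri
      linarith
    have hθb : θbar (‖ξs (φ k) (t1+ε) - zs‖ / ε) * ε
        ≤ θbar (conjFn θ (K+1) + cT + θbar 0 + 1) * ε := by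
      refine mul_le_mul_of_nonneg_right (hθbmono ?_) hε0.le
      rw [div_le_iff₀ hε0]
      linarith [hP, mul_comm (conjFn θ (K+1) + cT + θbar 0 + 1) ε]
    have hFi := integrand_II (L := L) h12.le (hgae (φ k)) (hLis (φ k))
    have hpl := piece_lb hK hθmono hθsl hbound h01 h2T (hgi (φ k)) hFi le_rfl
      (by linarith : t1 ≤ t1+ε) (by linarith)
    have hnn : 0 ≤ ∫ τ in t1..(t1+ε), ‖gs (φ k) τ‖ :=
      intervalIntegral.integral_nonneg (by linarith) fun τ _ => norm_nonneg _
    rw [show t1 + ε - t1 = ε from by ring] at hpl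
    have hKnn : 0 ≤ (K+1) * ∫ τ in t1..(t1+ε), ‖gs (φ k) τ‖ :=
      mul_nonneg (by linarith) hnn
    have hfs : fundSol L t1 t2 zs x2 ≤ curveAction L t1 t2 η :=
      fundSol_le hK hθmono hθsl hbound h01 h12.le h2T hadm
    have hfz : f zs - f (w (φ k)) ≤ K * (ε/2) := by
      have h6 := le_trans (le_abs_self _) (hf zs (w (φ k)))
      have h7 : K * ‖zs - w (φ k)‖ ≤ K * (ε/2) :=
        mul_le_mul_of_nonneg_left (by rw [norm_sub_rev]; exact hdist.le) hK
      linarith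
    have hfin := hmin (φ k)
    have hKε : 0 ≤ K * ε := mul_nonneg hK hε0.le
    simp only [hfun_def]
    clear_value hfun m
    linarith [hfs, hact, hθb, hpl, hKnn, hfz, hfin, hk2, hε0, hKε]
  refine ⟨zs, fun ww => ?_⟩
  have hz_le_m : hfun zs ≤ m := by
    by_contra hcon
    push_neg at hcon
    set C := 1 + K + θbar (conjFn θ (K+1) + cT + θbar 0 + 1) + conjFn θ (K+1) + cT with hC
    have hCpos : (0:ℝ) < max C 1 := lt_of_lt_of_le one_pos (le_max_right _ _)
    set ε := min ((hfun zs - m)/(2 * max C 1)) (t2 - t1) with hε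
    have hε0 : 0 < ε := lt_min (div_pos (by linarith) (by linarith)) (by linarith)
    have hkey' := hkey ε hε0 (min_le_right _ _)
    have h1 : C * ε ≤ max C 1 * ε := mul_le_mul_of_nonneg_right (le_max_left _ _) hε0.le
    have h2 : max C 1 * ε ≤ max C 1 * ((hfun zs - m)/(2 * max C 1)) :=
      mul_le_mul_of_nonneg_left (min_le_left _ _) hCpos.le
    have h3 : max C 1 * ((hfun zs - m)/(2 * max C 1)) = (hfun zs - m)/2 := by
      field_simp
    clear_value hfun m C ε
    linarith
  have hfinal := le_trans hz_le_m (hm_le ww)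
  simpa only [hfun_def] using hfinal

lemma exists_max
    (hLC : ContinuousOn (fun q : ℝ × Euc n × Euc n => L q.1 q.2.1 q.2.2)
      (Ici (0:ℝ) ×ˢ (univ : Set (Euc n × Euc n))))
    (hK : 0 ≤ K) (hf : ∀ x y : Euc n, |f x - f y| ≤ K * ‖x - y‖)
    (hθmono : Monotone θ) (hθbmono : Monotone θbar) (hθsl : Superlinear θ)
    (hbound : ∀ s ∈ Icc (0:ℝ) T, ∀ x v : Euc n, θ ‖v‖ - cT ≤ L s x v ∧ L s x v ≤ θbar ‖v‖)
    {t1 t2 : ℝ} (h01 : 0 ≤ t1) (h12 : t1 < t2) (h2T : t2 ≤ T) (x1 : Euc n) :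
    ∃ y : Euc n, ∀ w : Euc n,
      f w - fundSol L t1 t2 x1 w ≤ f y - fundSol L t1 t2 x1 y := by
  classical
  set pfun : Euc n → ℝ := fun w => f w - fundSol L t1 t2 x1 w with pfun_def
  have hfs_ge : ∀ w : Euc n,
      (K+1) * ‖w - x1‖ - (conjFn θ (K+1) + cT) * (t2 - t1) ≤ fundSol L t1 t2 x1 w :=
    fun w => fundSol_ge hK hθmono hθsl hbound hLC h01 h12 h2T x1 w
  have hp_ub : ∀ w, pfun w ≤ f x1 - ‖w - x1‖ + (conjFn θ (K+1) + cT) * (t2 - t1) := by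
    intro w
    have h1 := hfs_ge w
    have h2 : f w - f x1 ≤ K * ‖w - x1‖ := le_trans (le_abs_self _) (hf w x1)
    simp only [pfun_def]
    nlinarith
  have hba : BddAbove (Set.range pfun) := by
    refine ⟨f x1 + (conjFn θ (K+1) + cT) * (t2 - t1), ?_⟩
    rintro r ⟨w, rfl⟩
    have h1 := hp_ub w
    have h2 := norm_nonneg (w - x1)
    linarith
  set M := sSup (Set.range pfun) with hM
  have hM_ge : ∀ w, pfun w ≤ M := fun w => le_csSup hba ⟨w, rfl⟩
  have hseq : ∀ k : ℕ, ∃ (y : Euc n) (ξ g : ℝ → Euc n),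
      IntervalIntegrable g volume t1 t2 ∧
      (∀ τ ∈ Icc t1 t2, ξ τ = ξ t1 + ∫ σ in t1..τ, g σ) ∧
      (∀ᵐ τ ∂volume, τ ∈ Icc t1 t2 → HasDerivAt ξ (g τ) τ) ∧
      IntervalIntegrable (fun τ => L τ (ξ τ) (deriv ξ τ)) volume t1 t2 ∧
      ξ t1 = x1 ∧ ξ t2 = y ∧
      M - 2/((k:ℝ)+1) ≤ f y - curveAction L t1 t2 ξ := by
    intro k
    have hε : (0:ℝ) < 1/((k:ℝ)+1) := by positivity
    obtain ⟨r, ⟨y, rfl⟩, hr⟩ := Real.add_neg_lt_sSup (Set.range_nonempty pfun)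
      (neg_lt_zero.mpr hε)
    obtain ⟨r', ⟨ξ, hadm, rfl⟩, hr'⟩ :=
      Real.lt_sInf_add_pos (adm_nonempty hLC hbound h01 h12 h2T x1 y) hε
    obtain ⟨⟨g, h1, h2, h3⟩, h4, h5, h6⟩ := hadm
    refine ⟨y, ξ, g, h1, h2, h3, h4, h5, h6, ?_⟩
    have hfd : fundSol L t1 t2 x1 y = sInf {r | ∃ ξ : ℝ → Euc n,
        IsAdmissible L t1 t2 x1 y ξ ∧ r = curveAction L t1 t2 ξ} := rfl
    simp only [pfun_def] at hr
    rw [← hfd] at hr'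
    rw [← hM] at hr
    have h2e : 2/((k:ℝ)+1) = 1/((k:ℝ)+1) + 1/((k:ℝ)+1) := by ring
    rw [h2e]
    linarith
  choose y ξs gs hgi hgeq hgae hLis he1 he2 hmax using hseq
  have htame : ∀ k : ℕ, ∀ σ, t1 ≤ σ → σ < t2 →
      (∫ τ in σ..t2, ‖gs k τ‖)
        ≤ (conjFn θ (K+1) + cT + θbar 0) * (t2 - σ) + 2/((k:ℝ)+1) := by
    intro k σ hσ1 hσ2
    have hδ0 : (0:ℝ) < t2 - σ := by linarith
    have hδle : t2 - σ ≤ t2 - t1 := by linarith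
    obtain ⟨η, hadm, hact⟩ := rightSplice hLC hbound h01 h12 h2T (hgi k) (hgeq k) (hgae k)
      (hLis k) (he1 k) (ξs k σ) hδ0 hδle
    rw [show t2 - (t2 - σ) = σ from by ring, sub_self, norm_zero, zero_div] at hact
    have h1 : f (ξs k σ) - fundSol L t1 t2 x1 (ξs k σ) ≤ M := by
      have h3 := hM_ge (ξs k σ)
      simp only [pfun_def] at h3
      exact h3
    have h2 := fundSol_le hK hθmono hθsl hbound h01 h12.le h2T hadm
    have hW : (∫ τ in σ..t2, gs k τ) = y k - ξs k σ := by
      rw [integral_piece h12.le (hgi k) (hgeq k) hσ1 hσ2.le le_rfl, he2 k]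
    have hnormW : ‖y k - ξs k σ‖ ≤ ∫ τ in σ..t2, ‖gs k τ‖ := by
      rw [← hW]
      exact intervalIntegral.norm_integral_le_integral_norm hσ2.le
    have hfW : f (y k) - f (ξs k σ) ≤ K * ∫ τ in σ..t2, ‖gs k τ‖ :=
      le_trans (le_trans (le_abs_self _) (hf _ _)) (mul_le_mul_of_nonneg_left hnormW hK)
    have hFi := integrand_II (L := L) h12.le (hgae k) (hLis k)
    have hpl := piece_lb hK hθmono hθsl hbound h01 h2T (hgi k) hFi hσ1 hσ2.le le_rfl
    have hfin := hmax k
    clear_value pfun M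
    linarith
  have hyb : ∀ k : ℕ, y k ∈ Metric.closedBall x1
      (f x1 + (conjFn θ (K+1) + cT) * (t2 - t1) - M + 2) := by
    intro k
    have h1 := hmax k
    have hadm : IsAdmissible L t1 t2 x1 (y k) (ξs k) :=
      ⟨⟨gs k, hgi k, hgeq k, hgae k⟩, hLis k, he1 k, he2 k⟩
    have h2 := fundSol_le hK hθmono hθsl hbound h01 h12.le h2T hadm
    have h3 := hp_ub (y k)
    have h4 : 2/((k:ℝ)+1) ≤ 2 := by
      rw [div_le_iff₀ (by positivity)]
      have h5 : (0:ℝ) ≤ (k:ℝ) := Nat.cast_nonneg k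
      linarith
    rw [Metric.mem_closedBall, dist_eq_norm]
    simp only [pfun_def] at h3
    clear_value M
    linarith
  obtain ⟨ys, hysmem, φ, hφmono, hφtend⟩ :=
    (isCompact_closedBall x1 _).tendsto_subseq hyb
  have hkey : ∀ ε : ℝ, 0 < ε → ε ≤ t2 - t1 →
      M - (1 + K + θbar (conjFn θ (K+1) + cT + θbar 0 + 1)
        + conjFn θ (K+1) + cT) * ε ≤ pfun ys := by
    intro ε hε0 hεΔ
    have hev1 : ∀ᶠ k : ℕ in atTop, dist ((y ∘ φ) k) ys < ε/2 :=
      (Metric.tendsto_nhds.mp hφtend) (ε/2) (by positivity)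
    have hφtop : Tendsto (fun k : ℕ => ((φ k : ℝ)) + 1) atTop atTop :=
      tendsto_atTop_add_const_right _ 1 (tendsto_natCast_atTop_atTop.comp hφmono.tendsto_atTop)
    have hev2 : ∀ᶠ k : ℕ in atTop, 2/((φ k:ℝ)+1) ≤ ε/2 := by
      filter_upwards [hφtop.eventually_ge_atTop (4/ε)] with k hk
      rw [div_le_iff₀ (by positivity : (0:ℝ) < (φ k:ℝ)+1)]
      have h5 : ε/2 * (4/ε) ≤ ε/2 * ((φ k:ℝ)+1) := mul_le_mul_of_nonneg_left hk (by positivity)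
      have h42 : ε/2 * (4/ε) = 2 := by field_simp; ring
      linarith
    obtain ⟨k, hk1, hk2⟩ := (hev1.and hev2).exists
    obtain ⟨η, hadm, hact⟩ := rightSplice hLC hbound h01 h12 h2T (hgi (φ k)) (hgeq (φ k))
      (hgae (φ k)) (hLis (φ k)) (he1 (φ k)) ys hε0 hεΔ
    have htm := htame (φ k) (t2 - ε) (by linarith) (by linarith)
    rw [show t2 - (t2 - ε) = ε from by ring] at htm
    have hW : (∫ τ in (t2-ε)..t2, gs (φ k) τ) = y (φ k) - ξs (φ k) (t2-ε) := by
      rw [integral_piece h12.le (hgi (φ k)) (hgeq (φ k)) (by linarith) (by linarith) le_rfl,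
        he2 (φ k)]
    have hnormW : ‖y (φ k) - ξs (φ k) (t2-ε)‖ ≤ ∫ τ in (t2-ε)..t2, ‖gs (φ k) τ‖ := by
      rw [← hW]
      exact intervalIntegral.norm_integral_le_integral_norm (by linarith)
    have hdist : ‖y (φ k) - ys‖ < ε/2 := by
      rw [← dist_eq_norm]
      exact hk1
    have hP : ‖ys - ξs (φ k) (t2-ε)‖ ≤ (conjFn θ (K+1) + cT + θbar 0 + 1) * ε := by
      have htri := dist_triangle ys (y (φ k)) (ξs (φ k) (t2-ε))
      rw [dist_eq_norm, dist_eq_norm, dist_eq_norm] at htri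
      have h6 : ‖ys - y (φ k)‖ = ‖y (φ k) - ys‖ := norm_sub_rev _ _
      linarith
    have hθb : θbar (‖ys - ξs (φ k) (t2-ε)‖ / ε) * ε
        ≤ θbar (conjFn θ (K+1) + cT + θbar 0 + 1) * ε := by
      refine mul_le_mul_of_nonneg_right (hθbmono ?_) hε0.le
      rw [div_le_iff₀ hε0]
      linarith [hP, mul_comm (conjFn θ (K+1) + cT + θbar 0 + 1) ε]
    have hFi := integrand_II (L := L) h12.le (hgae (φ k)) (hLis (φ k))
    have hpl := piece_lb hK hθmono hθsl hbound h01 h2T (hgi (φ k)) hFi (by linarith)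
      (by linarith : t2 - ε ≤ t2) le_rfl
    have hnn : 0 ≤ ∫ τ in (t2-ε)..t2, ‖gs (φ k) τ‖ :=
      intervalIntegral.integral_nonneg (by linarith) fun τ _ => norm_nonneg _
    rw [show t2 - (t2 - ε) = ε from by ring] at hpl
    have hKnn : 0 ≤ (K+1) * ∫ τ in (t2-ε)..t2, ‖gs (φ k) τ‖ :=
      mul_nonneg (by linarith) hnn
    have hfs : fundSol L t1 t2 x1 ys ≤ curveAction L t1 t2 η :=
      fundSol_le hK hθmono hθsl hbound h01 h12.le h2T hadm
    have hfy : f (y (φ k)) - f ys ≤ K * (ε/2) := by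
      have h6 := le_trans (le_abs_self _) (hf (y (φ k)) ys)
      have h7 : K * ‖y (φ k) - ys‖ ≤ K * (ε/2) :=
        mul_le_mul_of_nonneg_left hdist.le hK
      linarith
    have hfin := hmax (φ k)
    have hKε : 0 ≤ K * ε := mul_nonneg hK hε0.le
    simp only [pfun_def]
    clear_value pfun M
    linarith [hfs, hact, hθb, hpl, hKnn, hfy, hfin, hk2, hε0, hKε]
  refine ⟨ys, fun ww => ?_⟩
  have hM_le_p : M ≤ pfun ys := by
    by_contra hcon
    push_neg at hcon
    set C := 1 + K + θbar (conjFn θ (K+1) + cT + θbar 0 + 1) + conjFn θ (K+1) + cT with hC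
    have hCpos : (0:ℝ) < max C 1 := lt_of_lt_of_le one_pos (le_max_right _ _)
    set ε := min ((M - pfun ys)/(2 * max C 1)) (t2 - t1) with hε
    have hε0 : 0 < ε := lt_min (div_pos (by linarith) (by linarith)) (by linarith)
    have hkey' := hkey ε hε0 (min_le_right _ _)
    have h1 : C * ε ≤ max C 1 * ε := mul_le_mul_of_nonneg_right (le_max_left _ _) hε0.le
    have h2 : max C 1 * ε ≤ max C 1 * ((M - pfun ys)/(2 * max C 1)) :=
      mul_le_mul_of_nonneg_left (min_le_left _ _) hCpos.le
    have h3 : max C 1 * ((M - pfun ys)/(2 * max C 1)) = (M - pfun ys)/2 := by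
      field_simp
    clear_value pfun M C ε
    linarith
  have hfinal := le_trans (hM_ge ww) hM_le_p
  simpa only [pfun_def] using hfinal

end Main

end Stmt1Aux

/-- A priori estimates for the Lax–Oleinik operators `T⁻` and `T⁺`:
minimizers/maximizers exist and stay within distance `λ₁(T,K)·(t₂−t₁)` of the base point,
where `λ₁(T,K) = θ_T*(K+1) + c_T + θ̄_T(0)`. -/
theorem stmt1 {n : ℕ} (L : ℝ → Euc n → Euc n → ℝ) (hL : TonelliTD L)
    (f : Euc n → ℝ) (K : ℝ) (hK : 0 ≤ K) (hf : ∀ x y : Euc n, |f x - f y| ≤ K * ‖x - y‖)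
    (T : ℝ) (hT : 0 < T) (cT : ℝ) (hcT : 0 < cT) (θ θbar : ℝ → ℝ)
    (hθmono : Monotone θ) (hθbmono : Monotone θbar)
    (hθnn : ∀ r : ℝ, 0 ≤ r → 0 ≤ θ r ∧ 0 ≤ θbar r)
    (hθsl : Superlinear θ) (hθbsl : Superlinear θbar)
    (hbound : ∀ s ∈ Icc (0:ℝ) T, ∀ x v : Euc n, θ ‖v‖ - cT ≤ L s x v ∧ L s x v ≤ θbar ‖v‖) :
    ∀ t1 t2 : ℝ, 0 ≤ t1 → t1 < t2 → t2 ≤ T → ∀ x1 x2 : Euc n,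
      ((∃ z : Euc n, ∀ w : Euc n,
          f z + fundSol L t1 t2 z x2 ≤ f w + fundSol L t1 t2 w x2) ∧
        (∀ z : Euc n,
          (∀ w : Euc n, f z + fundSol L t1 t2 z x2 ≤ f w + fundSol L t1 t2 w x2) →
          ‖z - x2‖ ≤ (conjFn θ (K + 1) + cT + θbar 0) * (t2 - t1))) ∧
      ((∃ y : Euc n, ∀ w : Euc n,
          f w - fundSol L t1 t2 x1 w ≤ f y - fundSol L t1 t2 x1 y) ∧
        (∀ y : Euc n,
          (∀ w : Euc n, f w - fundSol L t1 t2 x1 w ≤ f y - fundSol L t1 t2 x1 y) →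
          ‖y - x1‖ ≤ (conjFn θ (K + 1) + cT + θbar 0) * (t2 - t1))) := by
  intro t1 t2 ht1 h12 h2T x1 x2
  have hLC := hL.1.continuousOn
  refine ⟨⟨Stmt1Aux.exists_min hLC hK hf hθmono hθbmono hθsl hbound ht1 h12 h2T x2, ?_⟩,
    Stmt1Aux.exists_max hLC hK hf hθmono hθbmono hθsl hbound ht1 h12 h2T x1, ?_⟩
  · intro z hz
    have h1 := hz x2
    have hd := Stmt1Aux.fundSol_diag_le hK hθmono hθsl hbound hLC ht1 h12 h2T x2
    have hg := Stmt1Aux.fundSol_ge hK hθmono hθsl hbound hLC ht1 h12 h2T z x2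
    have hfz : f x2 - f z ≤ K * ‖x2 - z‖ := le_trans (le_abs_self _) (hf x2 z)
    rw [norm_sub_rev]
    nlinarith [h1, hd, hg, hfz]
  · intro y hy
    have h1 := hy x1
    have hd := Stmt1Aux.fundSol_diag_le hK hθmono hθsl hbound hLC ht1 h12 h2T x1
    have hg := Stmt1Aux.fundSol_ge hK hθmono hθsl hbound hLC ht1 h12 h2T x1 y
    have hfy : f y - f x1 ≤ K * ‖y - x1‖ := le_trans (le_abs_self _) (hf y x1)
    nlinarith [h1, hd, hg, hfy]
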